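/- Invariant of the disambiguation construction (Lemma on reachable states): if A' can reach state (P, S) from its initial state (∅, Q₀) by reading the length-i prefix of an infinite word w, then there is a node u on level i of the reduced split tree T_rs(A, w) whose label is S, and P equals the union of the labels of all nodes strictly to the left of u on level i. -/

import Mathlib

structure NAuto (Q A : Type) where
  Δ : Q → A → Q → Prop
  Q0 : Set Q
  F : Set Q

def IsPath {Q A : Type} (δ : Q → A → Q → Prop) (π : List Q) (v : List A) (p q : Q) : Prop :=
  π.length = v.length + 1 ∧ π.head? = some p ∧ π.getLast? = some q ∧
  ∀ (i : ℕ) a s t, v[i]? = some a → π[i]? = some s → π[i+1]? = some t → δ s a t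

def EDAat {Q A : Type} (M : NAuto Q A) (p : Q) : Prop :=
  ∃ (v : List A) (π₁ π₂ : List Q), π₁ ≠ π₂ ∧ IsPath M.Δ π₁ v p p ∧ IsPath M.Δ π₂ v p p

def EDA {Q A : Type} (M : NAuto Q A) : Prop := ∃ p, EDAat M p

def EDAF {Q A : Type} (M : NAuto Q A) : Prop := ∃ p ∈ M.F, EDAat M p

def IDAat {Q A : Type} (M : NAuto Q A) (p q : Q) : Prop :=
  p ≠ q ∧ ∃ (v : List A) (π₁ π₂ π₃ : List Q),
    IsPath M.Δ π₁ v p p ∧ IsPath M.Δ π₂ v p q ∧ IsPath M.Δ π₃ v q q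

def IDA {Q A : Type} (M : NAuto Q A) : Prop := ∃ p q, IDAat M p q

def IDAF {Q A : Type} (M : NAuto Q A) : Prop := ∃ p q, q ∈ M.F ∧ IDAat M p q

def BuchiRuns {Q A : Type} (M : NAuto Q A) (w : ℕ → A) : Set (ℕ → Q) :=
  {ρ | ρ 0 ∈ M.Q0 ∧ (∀ i, M.Δ (ρ i) (w i) (ρ (i+1))) ∧ ∀ n, ∃ m ≥ n, ρ m ∈ M.F}

def uvWord {A : Type} [Inhabited A] (u v : List A) : ℕ → A :=
  fun i => if i < u.length then u.getD i default else v.getD ((i - u.length) % v.length) default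

def stepSet {Q A : Type} (M : NAuto Q A) (P : Set Q) (a : A) : Set Q :=
  {q | ∃ p ∈ P, M.Δ p a q}

def splitLabelFrom {Q A : Type} (M : NAuto Q A) (w : ℕ → A) : Set Q → ℕ → List Bool → Set Q
  | P, _, [] => P
  | P, i, d :: u =>
      splitLabelFrom M w
        (if d then stepSet M P (w i) \ M.F else stepSet M P (w i) ∩ M.F) (i+1) u

def splitLabel {Q A : Type} (M : NAuto Q A) (w : ℕ → A) (u : List Bool) : Set Q :=
  splitLabelFrom M w M.Q0 0 u

def LeftOf (u v : List Bool) : Prop :=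
  u.length = v.length ∧ ∃ i, i < u.length ∧ u.take i = v.take i ∧
    u[i]? = some false ∧ v[i]? = some true

def rLabel {Q A : Type} (M : NAuto Q A) (w : ℕ → A) (u : List Bool) : Set Q :=
  splitLabel M w u \ ⋃ (v : List Bool) (_ : LeftOf v u), splitLabel M w v

def prefixNode (π : ℕ → Bool) (n : ℕ) : List Bool := List.ofFn (fun i : Fin n => π i)

def IsRSTPath {Q A : Type} (M : NAuto Q A) (w : ℕ → A) (π : ℕ → Bool) : Prop :=
  ∀ n, (rLabel M w (prefixNode π n)).Nonempty

def primeStep {Q A : Type} (M : NAuto Q A) (a : A) :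
    Set Q × Set Q → Set Q × Set Q → Prop := fun PS PS' =>
  PS'.2.Nonempty ∧
  ((PS'.1 = stepSet M PS.1 a ∧ PS'.2 = (stepSet M PS.2 a ∩ M.F) \ PS'.1) ∨
   (PS'.1 = stepSet M PS.1 a ∪ (stepSet M PS.2 a ∩ M.F) ∧
    PS'.2 = (stepSet M PS.2 a \ M.F) \ PS'.1))

def PrimeBuchiRuns {Q A : Type} (M : NAuto Q A) (w : ℕ → A) :
    Set (ℕ → Set Q × Set Q) :=
  {ρ | ρ 0 = (∅, M.Q0) ∧ (∀ i, primeStep M (w i) (ρ i) (ρ (i+1))) ∧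
       ∀ n, ∃ m ≥ n, (ρ m).2 ⊆ M.F}

def ReachPrime {Q A : Type} (M : NAuto Q A) (w : ℕ → A) : ℕ → Set Q × Set Q → Prop
  | 0, PS => PS = (∅, M.Q0)
  | i+1, PS => ∃ PS', ReachPrime M w i PS' ∧ primeStep M (w i) PS' PS

section Aux

variable {Q A : Type}

/-- numeric value of a bit list, MSB first, true = 1 -/
def bNat : List Bool → ℕ
  | [] => 0
  | b :: l => (if b then 2 ^ l.length else 0) + bNat l

lemma bNat_lt : ∀ l : List Bool, bNat l < 2 ^ l.length
  | [] => by simp [bNat]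
  | b :: l => by
    have := bNat_lt l
    simp only [bNat, List.length_cons, pow_succ]
    cases b <;> simp <;> omega

lemma leftOf_length {v u : List Bool} (h : LeftOf v u) : v.length = u.length := h.1

lemma take_eq_get? {v u : List Bool} {j : ℕ} (h : v.take j = u.take j) {k : ℕ} (hk : k < j) :
    v[k]? = u[k]? := by
  rw [← List.getElem?_take_of_lt hk, ← List.getElem?_take_of_lt (l := u) hk, h]

lemma leftOf_bNat_lt : ∀ (j : ℕ) (v u : List Bool), v.length = u.length → j < v.length →
    v.take j = u.take j → v[j]? = some false → u[j]? = some true → bNat v < bNat u := by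
  intro j
  induction j with
  | zero =>
    intro v u hlen hj htake hv hu
    match v, u with
    | false :: v', true :: u' =>
      simp only [List.length_cons, Nat.succ_inj] at hlen
      have h1 := bNat_lt v'
      simp only [bNat]
      rw [if_neg (by simp), if_pos (by trivial), ← hlen]
      omega
    | true :: v', _ :: u' => simp at hv
    | _ :: v', false :: u' => simp at hu
    | [], _ => simp at hj
    | _ :: _, [] => simp at hlen
  | succ j ih =>
    intro v u hlen hj htake hv hu
    match v, u with
    | a :: v', b :: u' =>
      simp only [List.length_cons, Nat.succ_inj] at hlen
      simp only [List.take_succ_cons, List.cons.injEq] at htake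
      obtain ⟨rfl, htake'⟩ := htake
      simp only [List.getElem?_cons_succ] at hv hu
      simp only [List.length_cons] at hj
      have := ih v' u' hlen (by omega) htake' hv hu
      simp only [bNat, hlen]
      omega
    | [], _ => simp at hj
    | _ :: _, [] => simp at hlen

lemma LeftOf.bNat_lt {v u : List Bool} (h : LeftOf v u) : bNat v < bNat u := by
  obtain ⟨hlen, j, hj, htake, hv, hu⟩ := h
  exact leftOf_bNat_lt j v u hlen hj htake hv hu

lemma LeftOf.trans {v₁ v₂ v₃ : List Bool} (h12 : LeftOf v₁ v₂) (h23 : LeftOf v₂ v₃) :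
    LeftOf v₁ v₃ := by
  obtain ⟨hl12, i, hi, ht12, h1i, h2i⟩ := h12
  obtain ⟨hl23, j, hj, ht23, h2j, h3j⟩ := h23
  refine ⟨hl12.trans hl23, ?_⟩
  rcases lt_trichotomy i j with hij | rfl | hij
  · refine ⟨i, hi, ?_, h1i, ?_⟩
    · rw [ht12]
      rw [show i = min i j from (min_eq_left hij.le).symm, ← List.take_take, ht23, List.take_take]
    · rw [← take_eq_get? ht23 hij, h2i]
  · exact ⟨i, hi, ht12.trans ht23, h1i, h3j⟩
  · refine ⟨j, by omega, ?_, ?_, h3j⟩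
    · rw [show j = min j i from (min_eq_left hij.le).symm, ← List.take_take, ht12,
        List.take_take, min_eq_left hij.le, ht23]
    · rw [take_eq_get? ht12 hij, h2j]

lemma leftOf_concat_iff {v u : List Bool} {d : Bool} :
    LeftOf v (u ++ [d]) ↔
      ∃ v₀ e, v = v₀ ++ [e] ∧ (LeftOf v₀ u ∨ (v₀ = u ∧ e = false ∧ d = true)) := by
  constructor
  · rintro ⟨hlen, j, hj, htake, hvj, huj⟩
    rcases v.eq_nil_or_concat with rfl | ⟨v₀, e, rfl⟩
    · simp at hlen
    simp only [List.concat_eq_append] at *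
    simp only [List.length_append, List.length_singleton] at hlen hj
    refine ⟨v₀, e, rfl, ?_⟩
    rcases lt_or_eq_of_le (Nat.lt_succ_iff.mp hj) with hju | rfl
    · left
      refine ⟨by omega, j, by omega, ?_, ?_, ?_⟩
      · rwa [List.take_append_of_le_length (l₁ := v₀) (by omega),
          List.take_append_of_le_length (l₁ := u) (by omega)] at htake
      · rwa [List.getElem?_append_left (l₁ := v₀) (by omega)] at hvj
      · rwa [List.getElem?_append_left (l₁ := u) (by omega)] at huj
    · have hv0 : v₀.length = u.length := by omega
      rw [List.take_append_of_le_length (l₁ := v₀) le_rfl, List.take_length,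
        List.take_append_of_le_length (l₁ := u) (le_of_eq hv0), hv0, List.take_length] at htake
      subst htake
      right
      rw [List.getElem?_concat_length] at hvj
      rw [hv0, List.getElem?_concat_length] at huj
      exact ⟨rfl, by simpa using hvj, by simpa using huj⟩
  · rintro ⟨v₀, e, rfl, ⟨hlen, j, hj, htake, hvj, huj⟩ | ⟨rfl, rfl, rfl⟩⟩
    · refine ⟨by simp [hlen], j, by simp; omega, ?_, ?_, ?_⟩
      · rw [List.take_append_of_le_length hj.le, List.take_append_of_le_length (by omega), htake]
      · rwa [List.getElem?_append_left hj]
      · rw [List.getElem?_append_left (by omega)]; exact huj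
    · exact ⟨by simp, v₀.length, by simp, by
        rw [List.take_append_of_le_length le_rfl, List.take_append_of_le_length le_rfl],
        List.getElem?_concat_length, List.getElem?_concat_length⟩

lemma splitLabelFrom_concat (M : NAuto Q A) (w : ℕ → A) (d : Bool) :
    ∀ (u : List Bool) (P : Set Q) (i : ℕ),
      splitLabelFrom M w P i (u ++ [d]) =
        if d then stepSet M (splitLabelFrom M w P i u) (w (i + u.length)) \ M.F
        else stepSet M (splitLabelFrom M w P i u) (w (i + u.length)) ∩ M.F := by
  intro u
  induction u with
  | nil => intro P i; cases d <;> simp [splitLabelFrom]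
  | cons b u ih =>
    intro P i
    have h : i + (u.length + 1) = i + 1 + u.length := by omega
    simp only [List.cons_append, splitLabelFrom, List.length_cons, h]
    exact ih _ _

lemma splitLabel_concat (M : NAuto Q A) (w : ℕ → A) (u : List Bool) (d : Bool) :
    splitLabel M w (u ++ [d]) =
      if d then stepSet M (splitLabel M w u) (w u.length) \ M.F
      else stepSet M (splitLabel M w u) (w u.length) ∩ M.F := by
  simpa [splitLabel] using splitLabelFrom_concat M w d u M.Q0 0

lemma exists_leftmost (M : NAuto Q A) (w : ℕ → A) (q : Q) :
    ∀ (v : List Bool), q ∈ splitLabel M w v →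
      ∃ v', (v' = v ∨ LeftOf v' v) ∧ q ∈ rLabel M w v' := by
  suffices H : ∀ (n : ℕ) (v : List Bool), bNat v < n → q ∈ splitLabel M w v →
      ∃ v', (v' = v ∨ LeftOf v' v) ∧ q ∈ rLabel M w v' by
    intro v hv; exact H (bNat v + 1) v (Nat.lt_succ_self _) hv
  intro n
  induction n with
  | zero => intro v h; omega
  | succ n ih =>
    intro v hn hv
    by_cases hq : q ∈ rLabel M w v
    · exact ⟨v, Or.inl rfl, hq⟩
    · have : q ∈ ⋃ (v' : List Bool) (_ : LeftOf v' v), splitLabel M w v' := by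
        simp only [rLabel, Set.mem_diff, hv, true_and, not_not] at hq
        exact hq
      simp only [Set.mem_iUnion] at this
      obtain ⟨v'', hlt, hq''⟩ := this
      obtain ⟨v', hv', hr⟩ := ih v'' (by have := hlt.bNat_lt; omega) hq''
      refine ⟨v', Or.inr ?_, hr⟩
      rcases hv' with rfl | h
      · exact hlt
      · exact h.trans hlt

lemma iUnion_rLabel_eq (M : NAuto Q A) (w : ℕ → A) (u : List Bool) :
    (⋃ (v : List Bool) (_ : LeftOf v u), rLabel M w v) =
      ⋃ (v : List Bool) (_ : LeftOf v u), splitLabel M w v := by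
  apply Set.Subset.antisymm
  · exact Set.iUnion₂_mono fun v _ => Set.diff_subset
  · rintro q hq
    simp only [Set.mem_iUnion] at hq ⊢
    obtain ⟨v, hvu, hv⟩ := hq
    obtain ⟨v', hv', hr⟩ := exists_leftmost M w q v hv
    refine ⟨v', ?_, hr⟩
    rcases hv' with rfl | h
    · exact hvu
    · exact h.trans hvu

lemma stepSet_union (M : NAuto Q A) (X Y : Set Q) (a : A) :
    stepSet M (X ∪ Y) a = stepSet M X a ∪ stepSet M Y a := by
  ext q; simp only [stepSet, Set.mem_setOf_eq, Set.mem_union]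
  constructor
  · rintro ⟨p, hp | hp, h⟩
    · exact Or.inl ⟨p, hp, h⟩
    · exact Or.inr ⟨p, hp, h⟩
  · rintro (⟨p, hp, h⟩ | ⟨p, hp, h⟩) <;> exact ⟨p, by simp [hp], h⟩

lemma stepSet_diff_union (M : NAuto Q A) (X L : Set Q) (a : A) :
    stepSet M (X \ L) a ∪ stepSet M L a = stepSet M X a ∪ stepSet M L a := by
  rw [← stepSet_union, ← stepSet_union, Set.diff_union_self]

end Aux

section Aux2

variable {Q A : Type}

lemma stepSet_mono (M : NAuto Q A) {X Y : Set Q} (h : X ⊆ Y) (a : A) :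
    stepSet M X a ⊆ stepSet M Y a := by
  rintro q ⟨p, hp, hd⟩; exact ⟨p, h hp, hd⟩

lemma iUnion_split_concat (M : NAuto Q A) (w : ℕ → A) (u : List Bool) (d : Bool) :
    (⋃ (v : List Bool) (_ : LeftOf v (u ++ [d])), splitLabel M w v) =
      stepSet M (⋃ (v : List Bool) (_ : LeftOf v u), splitLabel M w v) (w u.length) ∪
        (if d then stepSet M (splitLabel M w u) (w u.length) ∩ M.F else ∅) := by
  ext q
  simp only [Set.mem_iUnion, Set.mem_union]
  constructor
  · rintro ⟨v, hv, hq⟩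
    rw [leftOf_concat_iff] at hv
    obtain ⟨v₀, e, rfl, hcase⟩ := hv
    rcases hcase with h | ⟨rfl, rfl, rfl⟩
    · left
      have hlen : v₀.length = u.length := leftOf_length h
      rw [splitLabel_concat, hlen] at hq
      have hq' : q ∈ stepSet M (splitLabel M w v₀) (w u.length) := by
        cases e
        · rw [if_neg (by simp)] at hq; exact hq.1
        · rw [if_pos rfl] at hq; exact hq.1
      exact stepSet_mono M
        (Set.subset_iUnion₂ (s := fun v (_ : LeftOf v u) => splitLabel M w v) v₀ h) _ hq'
    · right
      rw [if_pos rfl]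
      rw [splitLabel_concat, if_neg (by simp)] at hq
      exact hq
  · rintro (hq | hq)
    · obtain ⟨p, hp, hd⟩ := hq
      simp only [Set.mem_iUnion] at hp
      obtain ⟨v₀, hv₀, hp'⟩ := hp
      have hq' : q ∈ stepSet M (splitLabel M w v₀) (w u.length) := ⟨p, hp', hd⟩
      by_cases hqF : q ∈ M.F
      · refine ⟨v₀ ++ [false], ?_, ?_⟩
        · rw [leftOf_concat_iff]; exact ⟨v₀, false, rfl, Or.inl hv₀⟩
        · rw [splitLabel_concat, leftOf_length hv₀, if_neg (by simp)]
          exact ⟨hq', hqF⟩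
      · refine ⟨v₀ ++ [true], ?_, ?_⟩
        · rw [leftOf_concat_iff]; exact ⟨v₀, true, rfl, Or.inl hv₀⟩
        · rw [splitLabel_concat, leftOf_length hv₀, if_pos rfl]
          exact ⟨hq', hqF⟩
    · cases d
      · simp at hq
      · rw [if_pos rfl] at hq
        refine ⟨u ++ [false], ?_, ?_⟩
        · rw [leftOf_concat_iff]; exact ⟨u, false, rfl, Or.inr ⟨rfl, rfl, rfl⟩⟩
        · rw [splitLabel_concat, if_neg (by simp)]
          exact hq

lemma inter_diff_congr {X Y D F' : Set Q} (h : X ∪ D = Y ∪ D) :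
    (X ∩ F') \ D = (Y ∩ F') \ D := by
  ext q
  have := Set.ext_iff.mp h q
  simp only [Set.mem_union, Set.mem_inter_iff, Set.mem_diff] at this ⊢
  tauto

lemma diff_diff_congr {X Y D F' : Set Q} (h : X ∪ D = Y ∪ D) :
    (X \ F') \ D = (Y \ F') \ D := by
  ext q
  have := Set.ext_iff.mp h q
  simp only [Set.mem_union, Set.mem_diff] at this ⊢
  tauto

lemma inter_union_congr {X Y D F' : Set Q} (h : X ∪ D = Y ∪ D) :
    (X ∩ F') ∪ D = (Y ∩ F') ∪ D := by
  ext q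
  have := Set.ext_iff.mp h q
  simp only [Set.mem_union, Set.mem_inter_iff] at this ⊢
  tauto

end Aux2

theorem prime_reach_invariant {Q A : Type} (M : NAuto Q A) (w : ℕ → A) (i : ℕ)
    (P S : Set Q) (h : ReachPrime M w i (P, S)) :
    ∃ u : List Bool, u.length = i ∧ rLabel M w u = S ∧
      P = ⋃ (v : List Bool) (_ : LeftOf v u), rLabel M w v := by
  induction i generalizing P S with
  | zero =>
    have h' : P = ∅ ∧ S = M.Q0 := by simpa [ReachPrime, Prod.ext_iff] using h
    obtain ⟨rfl, rfl⟩ := h'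
    have hempty : ∀ f : List Bool → Set Q,
        (⋃ (v : List Bool) (_ : LeftOf v ([] : List Bool)), f v) = ∅ := by
      intro f
      apply Set.eq_empty_iff_forall_notMem.mpr
      intro q hq
      simp only [Set.mem_iUnion] at hq
      obtain ⟨v, ⟨hlen, j, hj, _⟩, _⟩ := hq
      rw [List.length_nil] at hlen
      omega
    refine ⟨[], rfl, ?_, (hempty _).symm⟩
    rw [rLabel, hempty, Set.diff_empty]
    rfl
  | succ i ih =>
    obtain ⟨⟨P', S'⟩, hreach, hstep⟩ := h
    obtain ⟨u, hlen, hS', hP'⟩ := ih P' S' hreach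
    subst hlen
    simp only [primeStep] at hstep
    obtain ⟨hne, hcase⟩ := hstep
    set a := w u.length with ha
    set L : Set Q := ⋃ (v : List Bool) (_ : LeftOf v u), splitLabel M w v with hLdef
    have hK1 := iUnion_rLabel_eq M w u
    have hrl : rLabel M w u = splitLabel M w u \ L := by
      rw [hLdef]; rfl
    have hP'L : P' = L := by rw [hP', hK1]
    have hXY : stepSet M (splitLabel M w u \ L) a ∪ stepSet M L a
        = stepSet M (splitLabel M w u) a ∪ stepSet M L a := stepSet_diff_union M _ _ a
    rcases hcase with ⟨hP, hS⟩ | ⟨hP, hS⟩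
    · -- left child u ++ [false]
      have hU : (⋃ (v : List Bool) (_ : LeftOf v (u ++ [false])), splitLabel M w v)
          = stepSet M L a := by
        rw [iUnion_split_concat, if_neg (by simp), Set.union_empty]
      have hPeq : P = stepSet M L a := by rw [hP, hP'L]
      refine ⟨u ++ [false], by simp, ?_, ?_⟩
      · rw [rLabel, hU, splitLabel_concat, if_neg (by simp)]
        rw [hS, hPeq, ← hS', hrl]
        exact inter_diff_congr hXY.symm
      · rw [iUnion_rLabel_eq, hU, hPeq]
    · -- right child u ++ [true]
      have hU : (⋃ (v : List Bool) (_ : LeftOf v (u ++ [true])), splitLabel M w v)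
          = stepSet M L a ∪ (stepSet M (splitLabel M w u) a ∩ M.F) := by
        rw [iUnion_split_concat, if_pos rfl]
      have hPeq : P = stepSet M L a ∪ (stepSet M (splitLabel M w u \ L) a ∩ M.F) := by
        rw [hP, hP'L, ← hS', hrl]
      have hPeq2 : P = stepSet M L a ∪ (stepSet M (splitLabel M w u) a ∩ M.F) := by
        rw [hPeq, Set.union_comm, Set.union_comm (stepSet M L a)]
        exact inter_union_congr hXY
      refine ⟨u ++ [true], by simp, ?_, ?_⟩
      · rw [rLabel, hU, splitLabel_concat, if_pos rfl]
        rw [hS, hPeq2, ← hS', hrl]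
        apply diff_diff_congr
        rw [← Set.union_assoc, ← Set.union_assoc, hXY]
      · rw [iUnion_rLabel_eq, hU, hPeq2]
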